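/- Let Q be the transition matrix of a d-periodic chain on S absorbed at 0, with cyclic subclasses S_1,...,S_d. If ν is a quasi-stationary distribution, write ν = Σ_j m_j ν_j with ν_j = ν(· | S_j) and m_j = ν(S_j). Then for each j (indices mod d): m_j a(ν_j) = a(ν) m_{j+1}; ν_j T_n = ν_{j+n} for all n ≥ 0; and consequently (a(ν))^d = a(ν_1) a(ν_2) ··· a(ν_d). -/

import Mathlib

open scoped Classical

noncomputable section

/-- `n`-step transition probabilities of a kernel on a countable state space. -/
def kpow {α : Type*} (Q : α → α → ℝ) : ℕ → α → α → ℝ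
  | 0 => fun a b => if a = b then 1 else 0
  | n + 1 => fun a b => ∑' c, kpow Q n a c * Q c b

/-- Law at time `n` of the chain started from `ν` on `S`, evaluated at a point of
`S ∪ {0}` (represented as `Option S`, with `none` the absorbing state `0`). -/
def evolve {S : Type*} (Q : Option S → Option S → ℝ) (ν : S → ℝ) (n : ℕ)
    (y : Option S) : ℝ :=
  ∑' x : S, ν x * kpow Q n (some x) y

/-- `νT_n(y) = νQ^n(y) / (1 - νQ^n(0))`: the law at time `n` conditioned on
non-absorption up to time `n`.  (For `n = 0` this is `ν` itself.) -/
def condT {S : Type*} (Q : Option S → Option S → ℝ) (ν : S → ℝ) (n : ℕ) (y : S) : ℝ :=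
  evolve Q ν n (some y) / (1 - evolve Q ν n none)

/-- A probability measure on a countable set, as a nonnegative function summing to 1. -/
def IsProbability {α : Type*} (ν : α → ℝ) : Prop :=
  (∀ x, 0 ≤ ν x) ∧ HasSum ν 1

/-- Stochastic domination `μ ≺ μ'`: there is a coupling of `μ` and `μ'` supported
on `{(ω, ω') : ω ≤ ω'}`. -/
def StochDom {α : Type*} [Preorder α] (μ μ' : α → ℝ) : Prop :=
  ∃ π : α × α → ℝ, (∀ p, 0 ≤ π p) ∧ (∀ a, HasSum (fun b => π (a, b)) (μ a)) ∧
    (∀ b, HasSum (fun a => π (a, b)) (μ' b)) ∧ ∀ p, π p ≠ 0 → p.1 ≤ p.2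

/-- A measure on a product space is irreducible if any element of its support can be
reached from any other by successive single-coordinate changes staying in the support. -/
def IrreducibleMeasure {ι α : Type*} (μ : (ι → α) → ℝ) : Prop :=
  ∀ a b, μ a ≠ 0 → μ b ≠ 0 →
    Relation.ReflTransGen
      (fun u v => μ u ≠ 0 ∧ μ v ≠ 0 ∧ ∃ k, ∀ i, i ≠ k → u i = v i) a b

/-- The (unnormalized) law `(x_0,...,x_n) ↦ ν(x_0)Q(x_0,x_1)⋯Q(x_{n-1},x_n)` of a
length-`n` trajectory staying in `S`. -/
def trajMeasure {S : Type*} (Q : Option S → Option S → ℝ) (ν : S → ℝ) (n : ℕ)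
    (x : Fin (n + 1) → S) : ℝ :=
  ν (x 0) * ∏ k : Fin n, Q (some (x k.castSucc)) (some (x k.succ))


/-- `a(ν) = 1 - νQ(0)`: the probability of remaining in `S` after one step,
starting from `ν`. -/
def stayProb {S : Type*} (Q : Option S → Option S → ℝ) (ν : S → ℝ) : ℝ :=
  1 - ∑' x : S, ν x * Q (some x) none

/-- `ν(S_j)`: total mass given by `ν` to the cyclic subclass with label `j`
(the classes being the fibers of the labeling function `c`). -/
def classMass {S : Type*} {d : ℕ} (c : S → ZMod d) (ν : S → ℝ) (j : ZMod d) : ℝ :=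
  ∑' x : S, if c x = j then ν x else 0

/-- `ν(· | S_j)`: conditional law of `ν` given the cyclic subclass with label `j`. -/
def condClass {S : Type*} {d : ℕ} (c : S → ZMod d) (ν : S → ℝ) (j : ZMod d) : S → ℝ :=
  fun y => if c y = j then ν y / classMass c ν j else 0

/- ### Auxiliary lemmas -/

lemma myHasSum_swap {α β : Type*} {g : α → β → ℝ} (hg : ∀ a b, 0 ≤ g a b)
    {r : α → ℝ} (hr : ∀ a, HasSum (g a) (r a)) {s : ℝ} (hrs : HasSum r s) :
    HasSum (fun b => ∑' a, g a b) s := by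
  have hnn : 0 ≤ fun p : α × β => g p.1 p.2 := fun p => hg p.1 p.2
  have hsum : Summable (fun p : α × β => g p.1 p.2) := by
    rw [summable_prod_of_nonneg hnn]
    refine ⟨fun a => (hr a).summable, ?_⟩
    have h : (fun a => ∑' b, g a b) = r := funext fun a => (hr a).tsum_eq
    rw [h]; exact hrs.summable
  have hswap : Summable (fun p : β × α => g p.2 p.1) := hsum.prod_symm
  have hcols := (summable_prod_of_nonneg (f := fun p : β × α => g p.2 p.1)
    (fun p => hg p.2 p.1)).1 hswap
  have htsum : ∑' b, ∑' a, g a b = s := by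
    have h1 : ∑' p : β × α, g p.2 p.1 = ∑' b, ∑' a, g a b :=
      Summable.tsum_prod' hswap hcols.1
    have h2 : ∑' p : β × α, g p.2 p.1 = ∑' p : α × β, g p.1 p.2 :=
      (Equiv.prodComm β α).tsum_eq (fun p : α × β => g p.1 p.2)
    have h3 : ∑' p : α × β, g p.1 p.2 = ∑' a, ∑' b, g a b :=
      Summable.tsum_prod' hsum (fun a => (hr a).summable)
    have h4 : ∑' a, ∑' b, g a b = s := by
      have h : (fun a => ∑' b, g a b) = r := funext fun a => (hr a).tsum_eq
      rw [h, hrs.tsum_eq]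
    rw [← h1, h2, h3, h4]
  exact htsum ▸ hcols.2.hasSum

section Kpow
variable {α : Type*} {Q : α → α → ℝ}

lemma kpow_nonneg (hQnn : ∀ a b, 0 ≤ Q a b) : ∀ (n : ℕ) (a b : α), 0 ≤ kpow Q n a b
  | 0, a, b => by simp only [kpow]; split <;> norm_num
  | n + 1, a, b =>
    tsum_nonneg fun c => mul_nonneg (kpow_nonneg hQnn n a c) (hQnn c b)

lemma kpow_row (hQnn : ∀ a b, 0 ≤ Q a b) (hQrow : ∀ a, HasSum (Q a) 1) :
    ∀ (n : ℕ) (a : α), HasSum (kpow Q n a) 1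
  | 0, a => by
    have h := hasSum_single (f := fun b => if a = b then (1:ℝ) else 0) a
      (fun b' hb' => if_neg (fun h => hb' h.symm))
    simpa [kpow] using h
  | n + 1, a => by
    exact myHasSum_swap (g := fun c b => kpow Q n a c * Q c b)
      (fun c b => mul_nonneg (kpow_nonneg hQnn n a c) (hQnn c b))
      (r := fun c => kpow Q n a c)
      (fun c => by simpa using (hQrow c).mul_left (kpow Q n a c))
      (kpow_row hQnn hQrow n a)

lemma kpow_le_one (hQnn : ∀ a b, 0 ≤ Q a b) (hQrow : ∀ a, HasSum (Q a) 1)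
    (n : ℕ) (a b : α) : kpow Q n a b ≤ 1 :=
  le_hasSum (kpow_row hQnn hQrow n a) b (fun c _ => kpow_nonneg hQnn n a c)

lemma kpow_one (a b : α) : kpow Q 1 a b = Q a b := by
  show ∑' c, (if a = c then (1:ℝ) else 0) * Q c b = Q a b
  rw [tsum_eq_single a (fun c hc => by rw [if_neg (fun h => hc h.symm), zero_mul])]
  simp

end Kpow

section Ev
variable {S : Type*} {Q : Option S → Option S → ℝ} {ν : S → ℝ}

lemma hasSum_option_elim {f : Option S → ℝ} {t : ℝ} (hf : HasSum f t) :
    HasSum (fun s : S => f (some s)) (t - f none) := by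
  have h1 : HasSum (fun x : Option S => if x = none then f none else 0) (f none) :=
    hasSum_ite_eq none (f none)
  have h2 := hf.sub h1
  have h3 : HasSum ((fun x : Option S => f x - if x = none then f none else 0) ∘ some)
      (t - f none) := by
    refine (Function.Injective.hasSum_iff (Option.some_injective S) ?_).2 h2
    intro x hx
    cases x with
    | none => simp
    | some s => exact absurd ⟨s, rfl⟩ hx
  have h4 : ((fun x : Option S => f x - if x = none then f none else 0) ∘ some)
      = fun s : S => f (some s) := by
    funext s; simp
  rwa [h4] at h3

lemma Q_none_some (hQnn : ∀ a b, 0 ≤ Q a b) (hQrow : ∀ a, HasSum (Q a) 1)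
    (hQ00 : Q none none = 1) (y : S) : Q none (some y) = 0 := by
  have h := sum_le_hasSum ({none, some y} : Finset (Option S))
    (fun i _ => hQnn none i) (hQrow none)
  rw [Finset.sum_pair (by simp)] at h
  have h2 := hQnn none (some y)
  rw [hQ00] at h
  linarith

lemma evolve_summand_summable (hQnn : ∀ a b, 0 ≤ Q a b) (hQrow : ∀ a, HasSum (Q a) 1)
    (hν0 : ∀ x, 0 ≤ ν x) (hν1 : HasSum ν 1) (n : ℕ) (y : Option S) :
    Summable (fun x : S => ν x * kpow Q n (some x) y) :=
  Summable.of_nonneg_of_le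
    (fun x => mul_nonneg (hν0 x) (kpow_nonneg hQnn n _ _))
    (fun x => mul_le_of_le_one_right (hν0 x) (kpow_le_one hQnn hQrow n _ _))
    hν1.summable

lemma evolve_hasSum (hQnn : ∀ a b, 0 ≤ Q a b) (hQrow : ∀ a, HasSum (Q a) 1)
    (hν0 : ∀ x, 0 ≤ ν x) (hν1 : HasSum ν 1) (n : ℕ) :
    HasSum (evolve Q ν n) 1 :=
  myHasSum_swap (g := fun x b => ν x * kpow Q n (some x) b)
    (fun x b => mul_nonneg (hν0 x) (kpow_nonneg hQnn n _ _))
    (r := ν)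
    (fun x => by simpa using (kpow_row hQnn hQrow n (some x)).mul_left (ν x))
    hν1

lemma evolve_succ_hasSum (hQnn : ∀ a b, 0 ≤ Q a b) (hQrow : ∀ a, HasSum (Q a) 1)
    (hQ00 : Q none none = 1)
    (hν0 : ∀ x, 0 ≤ ν x) (hν1 : HasSum ν 1) (n : ℕ) (y : S) :
    HasSum (fun z : S => evolve Q ν n (some z) * Q (some z) (some y))
      (evolve Q ν (n + 1) (some y)) := by
  have hrows : ∀ x : S, HasSum (fun z : Option S => ν x * (kpow Q n (some x) z * Q z (some y)))
      (ν x * kpow Q (n + 1) (some x) (some y)) := by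
    intro x
    have hs : Summable (fun z : Option S => kpow Q n (some x) z * Q z (some y)) :=
      Summable.of_nonneg_of_le
        (fun z => mul_nonneg (kpow_nonneg hQnn n _ _) (hQnn _ _))
        (fun z => mul_le_of_le_one_right (kpow_nonneg hQnn n _ _)
          (le_hasSum (hQrow z) (some y) fun c _ => hQnn z c))
        (kpow_row hQnn hQrow n (some x)).summable
    have ht : ∑' z : Option S, kpow Q n (some x) z * Q z (some y)
        = kpow Q (n + 1) (some x) (some y) := rfl
    exact (ht ▸ hs.hasSum).mul_left (ν x)
  have houter : HasSum (fun x : S => ν x * kpow Q (n + 1) (some x) (some y))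
      (evolve Q ν (n + 1) (some y)) :=
    (evolve_summand_summable hQnn hQrow hν0 hν1 (n + 1) (some y)).hasSum
  have hmain := myHasSum_swap
    (g := fun x (z : Option S) => ν x * (kpow Q n (some x) z * Q z (some y)))
    (fun x z => mul_nonneg (hν0 x) (mul_nonneg (kpow_nonneg hQnn n _ _) (hQnn _ _)))
    hrows houter
  have heq : (fun z : Option S => ∑' x : S, ν x * (kpow Q n (some x) z * Q z (some y)))
      = fun z : Option S => evolve Q ν n z * Q z (some y) := by
    funext z
    have h : (fun x : S => ν x * (kpow Q n (some x) z * Q z (some y)))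
        = fun x : S => (ν x * kpow Q n (some x) z) * Q z (some y) := by
      funext x; ring
    rw [h, tsum_mul_right]; rfl
  rw [heq] at hmain
  have h5 := hasSum_option_elim hmain
  simpa [Q_none_some hQnn hQrow hQ00 y] using h5

lemma kpow_class {d : ℕ} (c : S → ZMod d)
    (hQnn : ∀ a b, 0 ≤ Q a b) (hQrow : ∀ a, HasSum (Q a) 1) (hQ00 : Q none none = 1)
    (hcQ : ∀ x y : S, Q (some x) (some y) ≠ 0 → c y = c x + 1) :
    ∀ (n : ℕ) (x y : S), kpow Q n (some x) (some y) ≠ 0 → c y = c x + n := by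
  intro n
  induction n with
  | zero =>
    intro x y h
    have hxy : some x = some y := by
      by_contra hne
      exact h (by simp [kpow, hne])
    obtain rfl : x = y := Option.some_injective S hxy
    simp
  | succ n ih =>
    intro x y h
    obtain ⟨z, hz⟩ : ∃ z : Option S, kpow Q n (some x) z * Q z (some y) ≠ 0 := by
      by_contra hall
      push_neg at hall
      apply h
      show ∑' z : Option S, kpow Q n (some x) z * Q z (some y) = 0
      have h0 : (fun z : Option S => kpow Q n (some x) z * Q z (some y)) = fun _ => 0 :=
        funext hall
      rw [h0, tsum_zero]
    cases z with
    | none =>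
      exact absurd (Q_none_some hQnn hQrow hQ00 y) (fun h0 => hz (by rw [h0, mul_zero]))
    | some z =>
      have h1 : kpow Q n (some x) (some z) ≠ 0 := fun h0 => hz (by rw [h0, zero_mul])
      have h2 : Q (some z) (some y) ≠ 0 := fun h0 => hz (by rw [h0, mul_zero])
      rw [hcQ z y h2, ih x z h1]
      push_cast
      ring

end Ev

/-- For a `d`-periodic chain absorbed at `0` with cyclic subclasses `S_1,...,S_d`
(the fibers of the labeling `c`), if `ν` is a qsd with `m_j = ν(S_j)` and
`ν_j = ν(· | S_j)`, then `m_j a(ν_j) = a(ν) m_{j+1}`, `ν_j T_n = ν_{j+n}` (indices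
mod `d`), and consequently `a(ν)^d = a(ν_1)⋯a(ν_d)`. -/
theorem periodic_qsd_classes {S : Type*} [Countable S]
    (Q : Option S → Option S → ℝ) (d : ℕ) (hd : 2 ≤ d)
    (c : S → ZMod d)
    (hQnn : ∀ a b, 0 ≤ Q a b)
    (hQrow : ∀ a, HasSum (Q a) 1)
    (hQ00 : Q none none = 1)
    (hQx0 : ∀ x : S, Q (some x) none < 1)
    (hirr : ∀ x y : S, ∃ n : ℕ, 1 ≤ n ∧ 0 < kpow Q n (some x) (some y))
    (hperiod : ∀ x : S,
      (∀ n, 1 ≤ n → 0 < kpow Q n (some x) (some x) → d ∣ n) ∧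
      (∀ m : ℕ, (∀ n, 1 ≤ n → 0 < kpow Q n (some x) (some x) → m ∣ n) → m ∣ d))
    (hcQ : ∀ x y : S, Q (some x) (some y) ≠ 0 → c y = c x + 1)
    (hclass : ∀ x y : S, c x = c y ↔
      ∃ l : ℕ, 1 ≤ l ∧ 0 < kpow Q (d * l) (some x) (some y))
    (ν : S → ℝ) (hν : IsProbability ν) (hqsd : ∀ y, condT Q ν 1 y = ν y) :
    (∀ j : ZMod d,
      classMass c ν j * stayProb Q (condClass c ν j) =
        stayProb Q ν * classMass c ν (j + 1)) ∧
    (∀ j : ZMod d, ∀ n : ℕ, ∀ y : S,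
      condT Q (condClass c ν j) n y = condClass c ν (j + (n : ZMod d)) y) ∧
    stayProb Q ν ^ d =
      ∏ j ∈ Finset.range d, stayProb Q (condClass c ν (j : ZMod d)) := by
  obtain ⟨hν0, hν1⟩ := hν
  haveI : NeZero d := ⟨by omega⟩
  set a := stayProb Q ν with ha_def
  set m := classMass c ν with hm
  set w := condClass c ν with hw
  -- `evolve ν 1 none` in terms of `a`
  have hev1none : evolve Q ν 1 none = 1 - a := by
    have h : evolve Q ν 1 none = ∑' x : S, ν x * Q (some x) none :=
      tsum_congr fun x => by rw [kpow_one]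
    rw [h, ha_def]; unfold stayProb; ring
  -- positivity of `a`
  have hQx0' : ∀ x : S, 0 < 1 - Q (some x) none := fun x => by have := hQx0 x; linarith
  have hts : HasSum (fun x : S => ν x * Q (some x) none) (1 - a) := by
    have hs : Summable (fun x : S => ν x * Q (some x) none) := by
      have h := evolve_summand_summable hQnn hQrow hν0 hν1 1 (none : Option S)
      have heq : (fun x : S => ν x * kpow Q 1 (some x) none)
          = fun x : S => ν x * Q (some x) none := funext fun x => by rw [kpow_one]
      rwa [heq] at h
    have h2 : ∑' x : S, ν x * Q (some x) none = 1 - a := by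
      rw [ha_def]; unfold stayProb; ring
    exact h2 ▸ hs.hasSum
  obtain ⟨x₀, hx₀⟩ : ∃ x : S, ν x ≠ 0 := by
    by_contra hall
    push_neg at hall
    have h0 : HasSum ν 0 := by
      have h : ν = fun _ => 0 := funext hall
      rw [h]; exact hasSum_zero
    exact one_ne_zero (hν1.unique h0)
  have hx₀pos : 0 < ν x₀ := (hν0 x₀).lt_of_ne (Ne.symm hx₀)
  have hg : HasSum (fun x : S => ν x * (1 - Q (some x) none)) a := by
    have h := hν1.sub hts
    have heq : (fun x : S => ν x - ν x * Q (some x) none)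
        = fun x : S => ν x * (1 - Q (some x) none) := by funext x; ring
    rw [heq] at h
    simpa using h
  have ha : 0 < a := by
    have h := Summable.tsum_pos hg.summable
      (fun x => mul_nonneg (hν0 x) (hQx0' x).le) x₀ (mul_pos hx₀pos (hQx0' x₀))
    rwa [hg.tsum_eq] at h
  -- one-step qsd identity
  have hev1 : ∀ y : S, evolve Q ν 1 (some y) = a * ν y := by
    intro y
    have h := hqsd y
    unfold condT at h
    rw [hev1none, show (1 : ℝ) - (1 - a) = a from by ring] at h
    rw [div_eq_iff ha.ne'] at h
    rw [h]; ring
  -- n-step identity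
  have hevn : ∀ (n : ℕ) (y : S), evolve Q ν n (some y) = a ^ n * ν y := by
    intro n
    induction n with
    | zero =>
      intro y
      show ∑' x : S, ν x * kpow Q 0 (some x) (some y) = a ^ 0 * ν y
      rw [tsum_eq_single y (fun x hx => by simp [kpow, hx])]
      simp [kpow]
    | succ n ih =>
      intro y
      rw [← (evolve_succ_hasSum hQnn hQrow hQ00 hν0 hν1 n y).tsum_eq]
      have heq : (fun z : S => evolve Q ν n (some z) * Q (some z) (some y))
          = fun z : S => a ^ n * (ν z * Q (some z) (some y)) := by
        funext z; rw [ih z]; ring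
      rw [heq, tsum_mul_left]
      have h1 : ∑' z : S, ν z * Q (some z) (some y) = a * ν y := by
        rw [← hev1 y]
        exact (tsum_congr fun z => by rw [kpow_one]).symm
      rw [h1]; ring
  -- positivity of ν
  have hνpos : ∀ y : S, 0 < ν y := by
    intro y
    obtain ⟨n, -, hn⟩ := hirr x₀ y
    have hpos : 0 < evolve Q ν n (some y) :=
      Summable.tsum_pos (evolve_summand_summable hQnn hQrow hν0 hν1 n (some y))
        (fun x => mul_nonneg (hν0 x) (kpow_nonneg hQnn n _ _)) x₀
        (mul_pos hx₀pos hn)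
    rw [hevn n y] at hpos
    rcases (hν0 y).lt_or_eq with h | h
    · exact h
    · rw [← h, mul_zero] at hpos; exact absurd hpos (lt_irrefl 0)
  -- class masses
  have hind : ∀ j : ZMod d, HasSum (fun x : S => if c x = j then ν x else 0) (m j) := by
    intro j
    have hs : Summable (fun x : S => if c x = j then ν x else 0) :=
      Summable.of_nonneg_of_le (fun x => by by_cases h : c x = j <;> simp [h, hν0 x])
        (fun x => by by_cases h : c x = j <;> simp [h, hν0 x]) hν1.summable
    exact hs.hasSum
  have hstep : ∀ x : S, ∃ y : S, Q (some x) (some y) ≠ 0 := by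
    intro x
    by_contra hall
    push_neg at hall
    have h1 : HasSum (Q (some x)) (Q (some x) none) :=
      hasSum_single none (fun b hb => by
        cases b with
        | none => exact absurd rfl hb
        | some y => exact hall y)
    exact absurd ((hQrow (some x)).unique h1).symm (hQx0 x).ne
  have hsurj : ∀ j : ZMod d, ∃ x : S, c x = j := by
    have hn : ∀ n : ℕ, ∃ x : S, c x = c x₀ + n := by
      intro n
      induction n with
      | zero => exact ⟨x₀, by simp⟩
      | succ n ih =>
        obtain ⟨x, hx⟩ := ih
        obtain ⟨y, hy⟩ := hstep x
        refine ⟨y, ?_⟩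
        rw [hcQ x y hy, hx]
        push_cast
        ring
    intro j
    obtain ⟨x, hx⟩ := hn (j - c x₀).val
    refine ⟨x, ?_⟩
    rw [hx, ZMod.natCast_rightInverse (j - c x₀)]
    ring
  have hmpos : ∀ j : ZMod d, 0 < m j := by
    intro j
    obtain ⟨x, hx⟩ := hsurj j
    have h := Summable.tsum_pos (hind j).summable
      (fun x => by by_cases h : c x = j <;> simp [h, hν0 x]) x
      (by rw [if_pos hx]; exact hνpos x)
    rwa [(hind j).tsum_eq] at h
  -- conditional laws
  have hw_eq : ∀ (j : ZMod d) (x : S), w j x = (if c x = j then ν x else 0) / m j := by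
    intro j x
    rw [hw, hm]
    by_cases h : c x = j <;> simp [condClass, h]
  have hw0 : ∀ (j : ZMod d) (x : S), 0 ≤ w j x := by
    intro j x
    rw [hw_eq]
    apply div_nonneg _ (hmpos j).le
    by_cases h : c x = j <;> simp [h, hν0 x]
  have hw1 : ∀ j : ZMod d, HasSum (w j) 1 := by
    intro j
    have h := (hind j).div_const (m j)
    rw [div_self (hmpos j).ne'] at h
    have heq : (fun x : S => (if c x = j then ν x else 0) / m j) = w j :=
      funext fun x => (hw_eq j x).symm
    rwa [heq] at h
  -- the key computation
  have hkey : ∀ (j : ZMod d) (n : ℕ) (y : S),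
      evolve Q (w j) n (some y) =
        if c y = j + (n : ZMod d) then a ^ n * ν y / m j else 0 := by
    intro j n y
    have hpt : ∀ x : S, w j x * kpow Q n (some x) (some y) =
        (if c y = j + (n : ZMod d) then (ν x * kpow Q n (some x) (some y)) / m j else 0) := by
      intro x
      by_cases hk : kpow Q n (some x) (some y) = 0
      · rw [hk]; simp
      · have hc := kpow_class c hQnn hQrow hQ00 hcQ n x y hk
        by_cases hx : c x = j
        · rw [hw_eq, if_pos hx, if_pos (by rw [hc, hx]), div_mul_eq_mul_div]
        · rw [hw_eq, if_neg hx, zero_div, zero_mul,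
            if_neg (fun hcy => hx (by exact add_right_cancel (hc.symm.trans hcy)))]
    have hev : evolve Q (w j) n (some y)
        = ∑' x : S, w j x * kpow Q n (some x) (some y) := rfl
    rw [hev, tsum_congr hpt]
    by_cases hcy : c y = j + (n : ZMod d)
    · simp only [if_pos hcy]
      rw [tsum_div_const]
      rw [show (∑' x : S, ν x * kpow Q n (some x) (some y)) = evolve Q ν n (some y) from rfl,
        hevn n y]
    · simp only [if_neg hcy, tsum_zero]
  have hCpos : ∀ (j : ZMod d) (n : ℕ), 0 < a ^ n * m (j + (n : ZMod d)) / m j :=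
    fun j n => div_pos (mul_pos (pow_pos ha n) (hmpos _)) (hmpos j)
  have hkey2 : ∀ (j : ZMod d) (n : ℕ) (y : S),
      evolve Q (w j) n (some y) =
        (a ^ n * m (j + (n : ZMod d)) / m j) * w (j + (n : ZMod d)) y := by
    intro j n y
    rw [hkey, hw_eq]
    by_cases hcy : c y = j + (n : ZMod d)
    · rw [if_pos hcy, if_pos hcy]
      have h1 := (hmpos (j + (n : ZMod d))).ne'
      have h2 := (hmpos j).ne'
      field_simp
    · simp [hcy]
  have hnone : ∀ (j : ZMod d) (n : ℕ),
      1 - evolve Q (w j) n none = a ^ n * m (j + (n : ZMod d)) / m j := by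
    intro j n
    have h1 := hasSum_option_elim (evolve_hasSum hQnn hQrow (hw0 j) (hw1 j) n)
    have h2 : HasSum (fun y : S => evolve Q (w j) n (some y))
        (a ^ n * m (j + (n : ZMod d)) / m j) := by
      have h := (hw1 (j + (n : ZMod d))).mul_left (a ^ n * m (j + (n : ZMod d)) / m j)
      have heq : (fun y : S => (a ^ n * m (j + (n : ZMod d)) / m j) * w (j + (n : ZMod d)) y)
          = fun y : S => evolve Q (w j) n (some y) :=
        funext fun y => (hkey2 j n y).symm
      rw [heq] at h
      simpa using h
    have h3 := h1.unique h2
    linarith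
  -- claim 2
  have hclaim2 : ∀ (j : ZMod d) (n : ℕ) (y : S),
      condT Q (w j) n y = w (j + (n : ZMod d)) y := by
    intro j n y
    unfold condT
    rw [hnone j n, hkey2 j n y, mul_comm, mul_div_assoc,
      div_self (hCpos j n).ne', mul_one]
  -- claim 1
  have hclaim1 : ∀ j : ZMod d, m j * stayProb Q (w j) = a * m (j + 1) := by
    intro j
    have h1 : stayProb Q (w j) = 1 - evolve Q (w j) 1 none := by
      unfold stayProb
      have heq : (∑' x : S, w j x * Q (some x) none) = evolve Q (w j) 1 none :=
        (tsum_congr fun x => by rw [kpow_one]).symm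
      rw [heq]
    rw [h1, hnone j 1, Nat.cast_one, pow_one, mul_comm,
      div_mul_cancel₀ _ (hmpos j).ne']
  refine ⟨hclaim1, hclaim2, ?_⟩
  -- claim 3
  have hprod : ∀ f : ZMod d → ℝ,
      ∏ j ∈ Finset.range d, f (j : ZMod d) = ∏ z : ZMod d, f z := by
    intro f
    refine Finset.prod_bij (fun i _ => (i : ZMod d)) (fun i _ => Finset.mem_univ _)
      ?_ ?_ (fun i _ => rfl)
    · intro i hi i' hi' h
      have h2 := congrArg ZMod.val h
      rwa [ZMod.val_cast_of_lt (Finset.mem_range.1 hi),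
        ZMod.val_cast_of_lt (Finset.mem_range.1 hi')] at h2
    · intro z _
      exact ⟨z.val, Finset.mem_range.2 (ZMod.val_lt z), ZMod.natCast_rightInverse z⟩
  have hpeq : ∏ j ∈ Finset.range d, (m (j : ZMod d) * stayProb Q (w (j : ZMod d)))
      = ∏ j ∈ Finset.range d, (a * m ((j : ZMod d) + 1)) :=
    Finset.prod_congr rfl fun j _ => hclaim1 _
  rw [Finset.prod_mul_distrib, Finset.prod_mul_distrib, Finset.prod_const,
    Finset.card_range] at hpeq
  have h2 : ∏ j ∈ Finset.range d, m ((j : ZMod d) + 1)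
      = ∏ j ∈ Finset.range d, m (j : ZMod d) := by
    rw [hprod (fun z => m (z + 1)), hprod m]
    exact Equiv.prod_comp (Equiv.addRight 1) m
  rw [h2] at hpeq
  have hP : ∏ j ∈ Finset.range d, m (j : ZMod d) ≠ 0 :=
    Finset.prod_ne_zero_iff.2 fun j _ => (hmpos _).ne'
  have h3 : (∏ j ∈ Finset.range d, m (j : ZMod d))
        * (∏ j ∈ Finset.range d, stayProb Q (w (j : ZMod d)))
      = (∏ j ∈ Finset.range d, m (j : ZMod d)) * a ^ d := by
    rw [hpeq, mul_comm]
  exact (mul_left_cancel₀ hP h3).symm
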